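/- Explicit value of the two-sided Skorokhod reflection at the endpoint: let Γ > 0, a ≤ 0, and let b : [a, 0] → ℝ be continuous. Assume there exist s, v with a ≤ s ≤ v ≤ 0 such that (i) b(v) = max_{t ∈ [s, 0]} b(t), (ii) b(v) − b(s) = Γ, and (iii) b(v) − b(t) < Γ for every t ∈ [v, 0]. Let (x, L⁻, L⁺) be any solution on [a, 0] of the two-sided Skorokhod problem in [−Γ, Γ] driven by 2b. Then x_t = Γ + 2(b(t) − b(v)) for every t ∈ [v, 0]; in particular x_0 = Γ − 2(b(v) − b(0)), independently of a and of the initial value x_a. -/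

import Mathlib

open MeasureTheory

/-- If a Stieltjes measure vanishes on a set containing `Ioc u t`, the function is flat. -/
lemma stieltjes_flat_of_measure_zero (L : StieltjesFunction ℝ) (S : Set ℝ)
    (hS : L.measure S = 0) (u t : ℝ) (hut : u ≤ t) (hsub : Set.Ioc u t ⊆ S) :
    L t = L u := by
  have h1 : L.measure (Set.Ioc u t) = 0 :=
    le_antisymm (hS ▸ measure_mono hsub) zero_le
  rw [L.measure_Ioc, ENNReal.ofReal_eq_zero] at h1
  have h2 := L.mono hut
  linarith

/-- Explicit value of the two-sided Skorokhod reflection at the endpoint: let `Γ > 0`,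
`a ≤ 0`, `b` continuous on `[a, 0]`, and suppose there are `a ≤ s ≤ v ≤ 0` with
`b v = max_{[s,0]} b`, `b v − b s = Γ` and `b v − b t < Γ` for `t ∈ [v, 0]`.
If `(x, L⁻, L⁺)` solves the two-sided Skorokhod problem in `[−Γ, Γ]` driven by `2b`
(with `L⁻, L⁺` nondecreasing — here Stieltjes functions — continuous on `[a, 0]`,
vanishing at `a`, whose Stieltjes measures put no mass on `{x > −Γ}` and `{x < Γ}`
respectively), then `x t = Γ + 2 (b t − b v)` on `[v, 0]`; in particular
`x 0 = Γ − 2 (b v − b 0)`. -/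
theorem skorokhod_endpoint_value
    (Γ a : ℝ) (hΓ : 0 < Γ) (ha : a ≤ 0)
    (b : ℝ → ℝ) (hb : ContinuousOn b (Set.Icc a 0))
    (s v : ℝ) (has : a ≤ s) (hsv : s ≤ v) (hv0 : v ≤ 0)
    (hmax : ∀ t ∈ Set.Icc s (0:ℝ), b t ≤ b v)
    (hrise : b v - b s = Γ)
    (hnodrop : ∀ t ∈ Set.Icc v (0:ℝ), b v - b t < Γ)
    (x : ℝ → ℝ) (Lm Lp : StieltjesFunction ℝ)
    (hx : ContinuousOn x (Set.Icc a 0))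
    (hLm : ContinuousOn (fun t => Lm t) (Set.Icc a 0))
    (hLp : ContinuousOn (fun t => Lp t) (Set.Icc a 0))
    (hxrange : ∀ t ∈ Set.Icc a (0:ℝ), x t ∈ Set.Icc (-Γ) Γ)
    (hLma : Lm a = 0) (hLpa : Lp a = 0)
    (heq : ∀ t ∈ Set.Icc a (0:ℝ), x t = x a + Lm t - Lp t + 2 * (b t - b a))
    (hLmflat : Lm.measure {t | t ∈ Set.Icc a (0:ℝ) ∧ -Γ < x t} = 0)
    (hLpflat : Lp.measure {t | t ∈ Set.Icc a (0:ℝ) ∧ x t < Γ} = 0) :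
    (∀ t ∈ Set.Icc v (0:ℝ), x t = Γ + 2 * (b t - b v)) ∧
    x 0 = Γ - 2 * (b v - b 0) := by
  have hva : a ≤ v := has.trans hsv
  have hvmem : v ∈ Set.Icc a (0:ℝ) := ⟨hva, hv0⟩
  have hsmem : s ∈ Set.Icc a (0:ℝ) := ⟨has, hsv.trans hv0⟩
  -- membership helper
  have hIcc : ∀ t ∈ Set.Icc v (0:ℝ), t ∈ Set.Icc a (0:ℝ) :=
    fun t ht => ⟨hva.trans ht.1, ht.2⟩
  -- Step 1: x v = Γ.
  have hxv : x v = Γ := by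
    set E : Set ℝ := {r ∈ Set.Icc s v | x r = Γ} with hE
    have hEclosed : IsClosed E := by
      have hxsv : ContinuousOn x (Set.Icc s v) := hx.mono (by
        intro r hr; exact ⟨has.trans hr.1, hr.2.trans hv0⟩)
      exact hxsv.preimage_isClosed_of_isClosed isClosed_Icc isClosed_singleton
    have hmemIcc : ∀ r ∈ Set.Icc s v, r ∈ Set.Icc a (0:ℝ) :=
      fun r hr => ⟨has.trans hr.1, hr.2.trans hv0⟩
    have hEne : E.Nonempty := by
      by_contra hne
      rw [Set.not_nonempty_iff_eq_empty] at hne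
      have hlt : ∀ r ∈ Set.Ioc s v, r ∈ Set.Icc a (0:ℝ) ∧ x r < Γ := by
        intro r hr
        have hr' : r ∈ Set.Icc s v := ⟨hr.1.le, hr.2⟩
        have hrm := hmemIcc r hr'
        refine ⟨hrm, lt_of_le_of_ne (hxrange r hrm).2 ?_⟩
        intro hxe
        have : r ∈ E := ⟨hr', hxe⟩
        simp [hne] at this
      have hflat : Lp v = Lp s :=
        stieltjes_flat_of_measure_zero Lp _ hLpflat s v hsv (fun r hr => hlt r hr)
      have h1 := heq v hvmem
      have h2 := heq s hsmem
      have hLmm := Lm.mono hsv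
      have hxs := (hxrange s hsmem).1
      have hxvΓ : Γ ≤ x v := by linarith
      have : v ∈ E := ⟨⟨hsv, le_refl v⟩, le_antisymm (hxrange v hvmem).2 hxvΓ⟩
      simp [hne] at this
    have hEbdd : BddAbove E := ⟨v, fun r hr => hr.1.2⟩
    set u := sSup E with hu
    have huE : u ∈ E := hEclosed.csSup_mem hEne hEbdd
    obtain ⟨⟨hsu, huv⟩, hxu⟩ := huE
    have humem : u ∈ Set.Icc a (0:ℝ) := hmemIcc u ⟨hsu, huv⟩
    have hlt : ∀ r ∈ Set.Ioc u v, r ∈ Set.Icc a (0:ℝ) ∧ x r < Γ := by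
      intro r hr
      have hr' : r ∈ Set.Icc s v := ⟨hsu.trans hr.1.le, hr.2⟩
      have hrm := hmemIcc r hr'
      refine ⟨hrm, lt_of_le_of_ne (hxrange r hrm).2 ?_⟩
      intro hxe
      have : r ≤ u := le_csSup hEbdd ⟨hr', hxe⟩
      exact absurd hr.1 (not_lt.mpr this)
    have hflat : Lp v = Lp u :=
      stieltjes_flat_of_measure_zero Lp _ hLpflat u v huv (fun r hr => hlt r hr)
    have h1 := heq v hvmem
    have h2 := heq u humem
    have hLmm := Lm.mono huv
    have hbu : b u ≤ b v := hmax u ⟨hsu, humem.2⟩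
    have hxvΓ : Γ ≤ x v := by linarith
    exact le_antisymm (hxrange v hvmem).2 hxvΓ
  -- Step 2: on [v,0], x t = Γ + 2 (b t - b v).
  have main : ∀ t ∈ Set.Icc v (0:ℝ), x t = Γ + 2 * (b t - b v) := by
    intro t ht
    have htm := hIcc t ht
    -- g r := (Lm r - Lp r) - (Lm v - Lp v)
    set g : ℝ → ℝ := fun r => (Lm r - Lp r) - (Lm v - Lp v) with hg
    have hgcont : ContinuousOn g (Set.Icc a 0) := by
      apply ContinuousOn.sub (hLm.sub hLp) continuousOn_const
    have hxg : ∀ r ∈ Set.Icc v (0:ℝ), x r = Γ + 2 * (b r - b v) + g r := by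
      intro r hr
      have h1 := heq r (hIcc r hr)
      have h2 := heq v hvmem
      simp only [hg]
      linarith
    have hgt : g t = 0 := by
      rcases lt_trichotomy (g t) 0 with hc | hc | hc
      · -- g t < 0 : use Lp flatness
        exfalso
        set F : Set ℝ := {r ∈ Set.Icc v t | 0 ≤ g r} with hF
        have hFclosed : IsClosed F := by
          have : ContinuousOn g (Set.Icc v t) := hgcont.mono (by
            intro r hr; exact hIcc r ⟨hr.1, hr.2.trans ht.2⟩)
          exact this.preimage_isClosed_of_isClosed isClosed_Icc isClosed_Ici
        have hFne : F.Nonempty := ⟨v, ⟨le_refl v, ht.1⟩, by simp [hg]⟩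
        have hFbdd : BddAbove F := ⟨t, fun r hr => hr.1.2⟩
        set w := sSup F with hw
        have hwF : w ∈ F := hFclosed.csSup_mem hFne hFbdd
        obtain ⟨⟨hvw, hwt⟩, hgw⟩ := hwF
        have hlt : ∀ r ∈ Set.Ioc w t, r ∈ Set.Icc a (0:ℝ) ∧ x r < Γ := by
          intro r hr
          have hr0 : r ∈ Set.Icc v (0:ℝ) := ⟨hvw.trans hr.1.le, hr.2.trans ht.2⟩
          have hrm := hIcc r hr0
          refine ⟨hrm, ?_⟩
          have hgr : g r < 0 := by
            by_contra hge
            push_neg at hge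
            have : r ≤ w := le_csSup hFbdd ⟨⟨hvw.trans hr.1.le, hr.2⟩, hge⟩
            exact absurd hr.1 (not_lt.mpr this)
          have hbr : b r ≤ b v := hmax r ⟨hsv.trans hr0.1, hr0.2⟩
          have := hxg r hr0
          linarith
        have hflat : Lp t = Lp w :=
          stieltjes_flat_of_measure_zero Lp _ hLpflat w t hwt (fun r hr => hlt r hr)
        have hLmm := Lm.mono hwt
        have : 0 ≤ g t := by simp only [hg] at hgw ⊢; linarith
        linarith
      · exact hc
      · -- g t > 0 : use Lm flatness
        exfalso
        set F : Set ℝ := {r ∈ Set.Icc v t | g r ≤ 0} with hF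
        have hFclosed : IsClosed F := by
          have : ContinuousOn g (Set.Icc v t) := hgcont.mono (by
            intro r hr; exact hIcc r ⟨hr.1, hr.2.trans ht.2⟩)
          exact this.preimage_isClosed_of_isClosed isClosed_Icc isClosed_Iic
        have hFne : F.Nonempty := ⟨v, ⟨le_refl v, ht.1⟩, by simp [hg]⟩
        have hFbdd : BddAbove F := ⟨t, fun r hr => hr.1.2⟩
        set w := sSup F with hw
        have hwF : w ∈ F := hFclosed.csSup_mem hFne hFbdd
        obtain ⟨⟨hvw, hwt⟩, hgw⟩ := hwF
        have hlt : ∀ r ∈ Set.Ioc w t, r ∈ Set.Icc a (0:ℝ) ∧ -Γ < x r := by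
          intro r hr
          have hr0 : r ∈ Set.Icc v (0:ℝ) := ⟨hvw.trans hr.1.le, hr.2.trans ht.2⟩
          have hrm := hIcc r hr0
          refine ⟨hrm, ?_⟩
          have hgr : 0 < g r := by
            by_contra hge
            push_neg at hge
            have : r ≤ w := le_csSup hFbdd ⟨⟨hvw.trans hr.1.le, hr.2⟩, hge⟩
            exact absurd hr.1 (not_lt.mpr this)
          have hbr : b v - b r < Γ := hnodrop r hr0
          have := hxg r hr0
          linarith
        have hflat : Lm t = Lm w :=
          stieltjes_flat_of_measure_zero Lm _ hLmflat w t hwt (fun r hr => hlt r hr)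
        have hLpm := Lp.mono hwt
        have : g t ≤ 0 := by simp only [hg] at hgw ⊢; linarith
        linarith
    have := hxg t ht
    linarith
  refine ⟨main, ?_⟩
  have := main 0 ⟨hv0, le_refl 0⟩
  linarith
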